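/- For all real numbers s, t with 1 ≤ s < t, the preimage under H of the domain D^{(2)}_{s,t} is H⁻¹(D^{(2)}_{s,t}) = {(z₁,z₂) ∈ D² : √(2/(t+1)) < ρ(z₁,z₂) < √(2/(s+1))}. -/

import Mathlib

/-- The map `H(z,w) = ((1−zw)/(z−w), i(1+zw)/(z−w), −i(z+w)/(z−w))`. -/
noncomputable def Hmap (z w : ℂ) : ℂ × ℂ × ℂ :=
  ((1 - z * w) / (z - w), Complex.I * (1 + z * w) / (z - w),
    -Complex.I * (z + w) / (z - w))

/-- The pseudohyperbolic distance `ρ(z,w) = |(z−w)/(1−conj(z)·w)|`. -/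
noncomputable def rho (z w : ℂ) : ℝ :=
  ‖(z - w) / (1 - (starRingEnd ℂ) z * w)‖

/-- The domain `D^{(2)}_{s,t}`. -/
def D2st (s t : ℝ) : Set (ℂ × ℂ × ℂ) :=
  {q | s < ‖q.1‖ ^ 2 + ‖q.2.1‖ ^ 2 - ‖q.2.2‖ ^ 2 ∧
       ‖q.1‖ ^ 2 + ‖q.2.1‖ ^ 2 - ‖q.2.2‖ ^ 2 < t ∧
       q.1 ^ 2 + q.2.1 ^ 2 - q.2.2 ^ 2 = 1 ∧
       0 < (q.2.1 * ((starRingEnd ℂ) q.1 + (starRingEnd ℂ) q.2.2)).im}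

lemma impos_aux (z w : ℂ) (hz : ‖z‖ < 1) (hw : ‖w‖ < 1) (hzw : z ≠ w) :
    0 < ((Complex.I * (1 + z * w) / (z - w)) *
      ((starRingEnd ℂ) ((1 - z * w)/(z-w)) + (starRingEnd ℂ) (-Complex.I * (z + w)/(z-w)))).im := by
  have hd : z - w ≠ 0 := sub_ne_zero.mpr hzw
  have hdc : (starRingEnd ℂ) (z - w) ≠ 0 := fun h => hd (by simpa using congrArg (starRingEnd ℂ) h)
  have hN : (0:ℝ) < Complex.normSq (z - w) := Complex.normSq_pos.mpr hd
  set G : ℂ := Complex.I*(1+z*w) * ((starRingEnd ℂ) (1-z*w) + Complex.I * (starRingEnd ℂ) (z+w)) with hG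
  have hE : (Complex.I * (1 + z * w) / (z - w)) *
      ((starRingEnd ℂ) ((1 - z * w)/(z-w)) + (starRingEnd ℂ) (-Complex.I * (z + w)/(z-w)))
      = G / (Complex.normSq (z - w) : ℂ) := by
    rw [hG, ← Complex.mul_conj (z - w)]
    simp only [map_div₀, map_sub, map_add, map_mul, map_one, Complex.conj_I, map_neg]
    field_simp
  rw [hE, Complex.div_im]
  simp only [Complex.ofReal_im, Complex.ofReal_re, mul_zero, zero_mul, sub_zero, zero_div]
  rw [Complex.normSq_ofReal]
  have hGim : G.im = 1 - Complex.normSq z * Complex.normSq w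
      + (1 - Complex.normSq w)*z.im + (1 - Complex.normSq z)*w.im := by
    rw [hG]
    simp [Complex.normSq_apply, Complex.mul_re, Complex.mul_im, Complex.add_re, Complex.add_im,
      Complex.sub_re, Complex.sub_im]
    ring
  have hGpos : 0 < G.im := by
    rw [hGim]
    have h1 : Complex.normSq z = ‖z‖ ^ 2 := (Complex.sq_norm z).symm
    have h2 : Complex.normSq w = ‖w‖ ^ 2 := (Complex.sq_norm w).symm
    have hy : -(‖z‖) ≤ z.im := neg_abs_le _ |>.trans' (by
      simpa using neg_le_neg (Complex.abs_im_le_norm z))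
    have hv : -(‖w‖) ≤ w.im := neg_abs_le _ |>.trans' (by
      simpa using neg_le_neg (Complex.abs_im_le_norm w))
    have ha := norm_nonneg z
    have hb := norm_nonneg w
    rw [h1, h2]
    nlinarith [mul_pos (mul_pos (sub_pos.2 hz) (sub_pos.2 hw))
        (by nlinarith : (0:ℝ) < 1 - ‖z‖ * ‖w‖),
      mul_nonneg (by nlinarith : (0:ℝ) ≤ 1 - ‖w‖^2) (by linarith : 0 ≤ z.im + ‖z‖),
      mul_nonneg (by nlinarith : (0:ℝ) ≤ 1 - ‖z‖^2) (by linarith : 0 ≤ w.im + ‖w‖)]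
  positivity

lemma abs_sum_eq (z w : ℂ) (hzw : z ≠ w) :
    ‖(Hmap z w).1‖ ^ 2 + ‖(Hmap z w).2.1‖ ^ 2
      - ‖(Hmap z w).2.2‖ ^ 2
    = 1 + 2 * ((1 - Complex.normSq z) * (1 - Complex.normSq w)) / Complex.normSq (z - w) := by
  have hd : z - w ≠ 0 := sub_ne_zero.mpr hzw
  have hN : (0:ℝ) < Complex.normSq (z - w) := Complex.normSq_pos.mpr hd
  simp only [Hmap, norm_div, map_div₀, div_pow, Complex.sq_norm]
  have h1 : Complex.normSq (Complex.I * (1 + z*w)) = Complex.normSq (1 + z*w) := by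
    rw [Complex.normSq_mul]; simp
  have h2 : Complex.normSq (-Complex.I * (z + w)) = Complex.normSq (z + w) := by
    rw [Complex.normSq_mul]; simp
  rw [h1, h2]
  have key : Complex.normSq (1 - z*w) + Complex.normSq (1 + z*w) - Complex.normSq (z + w)
      = Complex.normSq (z - w) + 2*(1 - Complex.normSq z)*(1 - Complex.normSq w) := by
    simp [Complex.normSq_apply, Complex.mul_re, Complex.mul_im, Complex.add_re, Complex.add_im,
      Complex.sub_re, Complex.sub_im]; ring
  field_simp
  linarith [key]

lemma quadric_eq (z w : ℂ) (hzw : z ≠ w) :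
    (Hmap z w).1 ^ 2 + (Hmap z w).2.1 ^ 2 - (Hmap z w).2.2 ^ 2 = 1 := by
  have hd : z - w ≠ 0 := sub_ne_zero.mpr hzw
  simp only [Hmap]
  field_simp
  ring_nf
  simp [Complex.I_sq]
  ring

lemma rho_sq_eq (z w : ℂ) :
    rho z w ^ 2 = Complex.normSq (z - w)
      / (Complex.normSq (z - w) + (1 - Complex.normSq z) * (1 - Complex.normSq w)) := by
  have key : Complex.normSq (1 - (starRingEnd ℂ) z * w)
      = Complex.normSq (z - w) + (1 - Complex.normSq z)*(1 - Complex.normSq w) := by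
    simp [Complex.normSq_apply, Complex.mul_re, Complex.mul_im, Complex.add_re, Complex.add_im,
      Complex.sub_re, Complex.sub_im]; ring
  rw [rho, Complex.sq_norm, map_div₀, key]

/-- For `1 ≤ s < t`, the preimage under `H` (defined on `D² ∖ Δ`) of the domain
`D^{(2)}_{s,t}` equals `{(z₁,z₂) ∈ D² : √(2/(t+1)) < ρ(z₁,z₂) < √(2/(s+1))}`. -/
theorem Hmap_preimage_D2st (s t : ℝ) (hs : 1 ≤ s) (hst : s < t) :
    {p : ℂ × ℂ | ‖p.1‖ < 1 ∧ ‖p.2‖ < 1 ∧ p.1 ≠ p.2 ∧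
        Hmap p.1 p.2 ∈ D2st s t} =
    {p : ℂ × ℂ | ‖p.1‖ < 1 ∧ ‖p.2‖ < 1 ∧
        Real.sqrt (2 / (t + 1)) < rho p.1 p.2 ∧
        rho p.1 p.2 < Real.sqrt (2 / (s + 1))} := by
  have hs1 : (0:ℝ) < s + 1 := by linarith
  have ht1 : (0:ℝ) < t + 1 := by linarith
  ext ⟨z, w⟩
  simp only [Set.mem_setOf_eq]
  constructor
  · rintro ⟨hz, hw, hzw, hmem⟩
    obtain ⟨hQs, hQt, -, -⟩ := hmem
    have hd : z - w ≠ 0 := sub_ne_zero.mpr hzw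
    set d := Complex.normSq (z - w) with hdd
    set P := (1 - Complex.normSq z) * (1 - Complex.normSq w) with hPP
    have hdpos : 0 < d := Complex.normSq_pos.mpr hd
    have hz2 : Complex.normSq z < 1 := by
      rw [← Complex.sq_norm]; nlinarith [norm_nonneg z]
    have hw2 : Complex.normSq w < 1 := by
      rw [← Complex.sq_norm]; nlinarith [norm_nonneg w]
    have hPpos : 0 < P := mul_pos (by linarith) (by linarith)
    rw [abs_sum_eq z w hzw] at hQs hQt
    have hrho : rho z w ^ 2 = d / (d + P) := rho_sq_eq z w
    have hrhopos : 0 < rho z w := by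
      apply norm_pos_iff.mpr
      apply div_ne_zero hd
      intro h
      have h1 : ‖(starRingEnd ℂ) z * w‖ < 1 := by
        rw [norm_mul, Complex.norm_conj]
        nlinarith [norm_nonneg z, norm_nonneg w]
      have heq : (starRingEnd ℂ) z * w = 1 := by linear_combination -h
      rw [heq] at h1; simp at h1
    refine ⟨hz, hw, ?_, ?_⟩
    · rw [Real.sqrt_lt' hrhopos, hrho, div_lt_div_iff₀ ht1 (by linarith)]
      have h' : 2*P < (t-1)*d := (div_lt_iff₀ hdpos).mp (by linarith : 2*P/d < t - 1)
      linarith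
    · rw [Real.lt_sqrt hrhopos.le, hrho, div_lt_div_iff₀ (by linarith) hs1]
      have h' : (s-1)*d < 2*P := (lt_div_iff₀ hdpos).mp (by linarith : s - 1 < 2*P/d)
      linarith
  · rintro ⟨hz, hw, h1, h2⟩
    have hzw : z ≠ w := by
      intro h
      rw [h] at h1
      have : rho w w = 0 := by simp [rho]
      rw [this] at h1
      exact absurd h1 (not_lt.mpr (Real.sqrt_nonneg _))
    have hd : z - w ≠ 0 := sub_ne_zero.mpr hzw
    set d := Complex.normSq (z - w) with hdd
    set P := (1 - Complex.normSq z) * (1 - Complex.normSq w) with hPP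
    have hdpos : 0 < d := Complex.normSq_pos.mpr hd
    have hz2 : Complex.normSq z < 1 := by
      rw [← Complex.sq_norm]; nlinarith [norm_nonneg z]
    have hw2 : Complex.normSq w < 1 := by
      rw [← Complex.sq_norm]; nlinarith [norm_nonneg w]
    have hPpos : 0 < P := mul_pos (by linarith) (by linarith)
    have hrho : rho z w ^ 2 = d / (d + P) := rho_sq_eq z w
    have hrhopos : 0 < rho z w := lt_of_le_of_lt (Real.sqrt_nonneg _) h1
    rw [Real.sqrt_lt' hrhopos, hrho, div_lt_div_iff₀ ht1 (by linarith)] at h1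
    rw [Real.lt_sqrt hrhopos.le, hrho, div_lt_div_iff₀ (by linarith) hs1] at h2
    refine ⟨hz, hw, hzw, ?_, ?_, quadric_eq z w hzw, ?_⟩
    · rw [abs_sum_eq z w hzw]
      have h' : s - 1 < 2*P/d := (lt_div_iff₀ hdpos).mpr (by linarith)
      linarith
    · rw [abs_sum_eq z w hzw]
      have h' : 2*P/d < t - 1 := (div_lt_iff₀ hdpos).mpr (by linarith)
      linarith
    · simp only [Hmap]
      exact impos_aux z w hz hw hzw
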